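/- Let q(x) = f₀ + g₀ᵀ(x − x₀) + ½ (x − x₀)ᵀ H₀ (x − x₀) be a quadratic function on ℝ^K with H₀ symmetric, and let G ⊂ ℝ^K be a grid of points of the form x₀ − r + δ ∘ n for n ∈ {0,...,N}^K covering the hyper-rectangle R = {x : |x_k − x₀_k| ≤ r_k ∀k}, where δ = 2r/N. Then min over x ∈ R of q(x) ≥ (min over grid points of q) − (1/8) λ δᵀδ, where λ = max(λ_max(H₀), 0) and λ_max(H₀) is the largest eigenvalue of H₀. -/

import Mathlib

open Matrix

lemma diag_le_sup_eigenvalues {K : ℕ} (H : Matrix (Fin K) (Fin K) ℝ)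
    (hH : H.IsHermitian) (j : Fin K) : H j j ≤ ⨆ k, hH.eigenvalues k := by
  have hne : Nonempty (Fin K) := ⟨j⟩
  set U : Matrix (Fin K) (Fin K) ℝ := (hH.eigenvectorUnitary : Matrix (Fin K) (Fin K) ℝ) with hU
  have hspec := hH.spectral_theorem
  have hdiag : H j j = ∑ i, hH.eigenvalues i * (U j i)^2 := by
    conv_lhs => rw [hspec, Unitary.conjStarAlgAut_apply]
    rw [Matrix.mul_apply]
    refine Finset.sum_congr rfl fun i _ => ?_
    rw [Matrix.mul_diagonal]
    simp [star_apply, hU]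
    ring
  have hsum : ∑ i, (U j i)^2 = 1 := by
    have h1 : (U * star U) j j = (1 : Matrix (Fin K) (Fin K) ℝ) j j := by
      rw [(Matrix.mem_unitaryGroup_iff).1 hH.eigenvectorUnitary.2]
    rw [Matrix.mul_apply] at h1
    simp [star_apply, Matrix.one_apply, pow_two] at h1
    simpa [pow_two] using h1
  calc H j j = ∑ i, hH.eigenvalues i * (U j i)^2 := hdiag
    _ ≤ ∑ i, (⨆ k, hH.eigenvalues k) * (U j i)^2 := by
        refine Finset.sum_le_sum fun i _ => ?_
        exact mul_le_mul_of_nonneg_right (le_ciSup (Set.Finite.bddAbove (Set.finite_range _)) i) (sq_nonneg _)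
    _ = ⨆ k, hH.eigenvalues k := by rw [← Finset.mul_sum, hsum, mul_one]

lemma q_update_eq {K : ℕ} (f0 : ℝ) (g : Fin K → ℝ) (H : Matrix (Fin K) (Fin K) ℝ)
    (hH : H.IsHermitian) (x0 : Fin K → ℝ)
    (q : (Fin K → ℝ) → ℝ)
    (hq : q = fun x => f0 + g ⬝ᵥ (x - x0) + (1 / 2) * ((x - x0) ⬝ᵥ H *ᵥ (x - x0)))
    (y : Fin K → ℝ) (j : Fin K) (u : ℝ) :
    q (Function.update y j u) =
      q y + (g j + (H *ᵥ (y - x0)) j) * (u - y j)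
        + (1 / 2) * H j j * (u - y j) ^ 2 := by
  subst hq
  set w : Fin K → ℝ := y - x0 with hw
  set c : ℝ := u - y j with hc
  have hupd : Function.update y j u - x0 = w + Pi.single j c := by
    funext i
    by_cases h : i = j
    · subst h; simp [Function.update_self, hw, hc]
    · simp [Function.update_of_ne h, Pi.single_apply, h, hw]
  have hsym : ∀ i i', H i i' = H i' i := fun i i' => by
    have := congrFun (congrFun hH i) i'
    simpa [Matrix.conjTranspose_apply] using this.symm
  have h1 : g ⬝ᵥ (w + Pi.single j c) = g ⬝ᵥ w + g j * c := by
    rw [dotProduct_add, dotProduct_single]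
  have hmvs : H *ᵥ Pi.single j c = fun i => H i j * c := by
    funext i
    simp [Matrix.mulVec, dotProduct_single]
  have h2 : (w + Pi.single j c) ⬝ᵥ H *ᵥ (w + Pi.single j c)
      = w ⬝ᵥ H *ᵥ w + 2 * ((H *ᵥ w) j * c) + H j j * c ^ 2 := by
    rw [Matrix.mulVec_add, dotProduct_add, add_dotProduct, add_dotProduct,
      hmvs, single_dotProduct]
    have ha : w ⬝ᵥ (fun i => H i j * c) = (H *ᵥ w) j * c := by
      simp only [dotProduct, Matrix.mulVec, Finset.sum_mul]
      refine Finset.sum_congr rfl fun i _ => ?_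
      rw [hsym i j]; ring
    have hb : (Pi.single j c : Fin K → ℝ) ⬝ᵥ (fun i => H i j * c) = H j j * c ^ 2 := by
      rw [single_dotProduct]; ring
    rw [ha, hb]
    ring
  simp only [hupd, h1, h2, ← hw]
  ring

set_option maxHeartbeats 2000000 in
lemma step_exists {K : ℕ} (f0 : ℝ) (g : Fin K → ℝ) (H : Matrix (Fin K) (Fin K) ℝ)
    (hH : H.IsHermitian) (x0 r : Fin K → ℝ) (hr : ∀ k, 0 ≤ r k) (N : ℕ) (hN : 0 < N)
    (δ : Fin K → ℝ) (hδ : δ = fun k => 2 * r k / N)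
    (q : (Fin K → ℝ) → ℝ)
    (hq : q = fun x => f0 + g ⬝ᵥ (x - x0) + (1 / 2) * ((x - x0) ⬝ᵥ H *ᵥ (x - x0)))
    (lam : ℝ) (hlam : lam = max (⨆ k, hH.eigenvalues k) 0)
    (y : Fin K → ℝ) (hy : ∀ k, |y k - x0 k| ≤ r k) (j : Fin K) :
    ∃ m : Fin (N + 1),
      |x0 j - r j + δ j * (m : ℕ) - x0 j| ≤ r j ∧
      q (Function.update y j (x0 j - r j + δ j * (m : ℕ))) ≤
        q y + (1 / 8) * lam * δ j ^ 2 := by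
  have hlam0 : 0 ≤ lam := hlam ▸ le_max_right _ _
  have hHjj : H j j ≤ lam := hlam ▸ le_trans (diag_le_sup_eigenvalues H hH j) (le_max_left _ _)
  have hNr : (N : ℝ) ≠ 0 := Nat.cast_ne_zero.2 hN.ne'
  have hdj0 : 0 ≤ δ j := by
    have := hr j
    rw [hδ]; positivity
  have hNdj : (N : ℝ) * δ j = 2 * r j := by
    rw [hδ]; field_simp
  set a : ℝ := x0 j - r j with ha
  set s : ℝ := y j - a with hs
  have hs0 : 0 ≤ s := by
    have := (abs_le.1 (hy j)).1
    simp only [hs, ha]; linarith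
  have hsN : s ≤ (N : ℝ) * δ j := by
    have := (abs_le.1 (hy j)).2
    rw [hNdj]; simp only [hs, ha]; linarith
  rcases eq_or_lt_of_le hdj0 with hdj | hdj
  · -- δ j = 0, hence r j = 0 and y j = a
    have hrj : r j = 0 := by
      have : 2 * r j = 0 := by rw [← hNdj, ← hdj]; ring
      linarith
    have hyj : y j = a := by
      have h1 := (abs_le.1 (hy j)).1
      have h2 := (abs_le.1 (hy j)).2
      simp [ha, hrj] at *; linarith
    refine ⟨⟨0, by omega⟩, ?_, ?_⟩
    · simp [← hdj, ha, hrj]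
    · have : Function.update y j (a + δ j * ((0:ℕ):ℝ)) = y := by
        rw [← hdj]; simp [hyj.symm]
      rw [show ((⟨0, by omega⟩ : Fin (N+1)) : ℕ) = 0 from rfl]
      rw [this]
      nlinarith [sq_nonneg (δ j)]
  · -- δ j > 0
    set i : ℕ := min (⌊s / δ j⌋₊) (N - 1) with hi
    have hiN : i + 1 ≤ N := by omega
    have hlow : δ j * i ≤ s := by
      have h1 : (i : ℝ) ≤ ⌊s / δ j⌋₊ := by exact_mod_cast Nat.cast_le.2 (min_le_left _ _)
      have h2 : (⌊s / δ j⌋₊ : ℝ) ≤ s / δ j := Nat.floor_le (by positivity)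
      have := le_trans h1 h2
      calc δ j * i ≤ δ j * (s / δ j) := by nlinarith
        _ = s := by field_simp
    have hhigh : s ≤ δ j * (i + 1) := by
      rcases le_or_gt (⌊s / δ j⌋₊) (N - 1) with h | h
      · have hieq : i = ⌊s / δ j⌋₊ := by omega
        have h2 : s / δ j < ⌊s / δ j⌋₊ + 1 := Nat.lt_floor_add_one _
        have h3 : s / δ j * δ j < ((⌊s / δ j⌋₊ : ℝ) + 1) * δ j :=
          mul_lt_mul_of_pos_right h2 hdj
        have h4 : s / δ j * δ j = s := by field_simp
        rw [hieq]
        nlinarith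
      · have hieq : i = N - 1 := by omega
        have : (i : ℝ) + 1 = N := by
          rw [hieq]; push_cast [Nat.cast_sub (by omega : 1 ≤ N)]; ring
        rw [this, mul_comm]; exact hsN
    set t : ℝ := (s - δ j * i) / δ j with ht
    have ht0 : 0 ≤ t := by
      apply div_nonneg _ hdj.le; linarith
    have ht1 : t ≤ 1 := by
      rw [div_le_one hdj]; linarith
    have htd : t * δ j = s - δ j * i := by
      rw [ht]; field_simp
    -- feasibility helper
    have hfeas : ∀ m : ℕ, m ≤ N → |a + δ j * m - x0 j| ≤ r j := by
      intro m hm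
      rw [abs_le]
      constructor
      · have h9 : 0 ≤ δ j * m := by positivity
        rw [ha]; linarith
      · have h9 : δ j * (m:ℝ) ≤ δ j * (N:ℝ) := by
          apply mul_le_mul_of_nonneg_left _ hdj0; exact_mod_cast hm
        rw [ha]; linarith [hNdj, h9]
    set A : ℝ := g j + (H *ᵥ (y - x0)) j with hA
    clear_value A
    clear_value t
    clear_value i
    clear_value s
    clear_value a
    obtain ⟨u0, hu0⟩ : ∃ u0 : ℝ, u0 = a + δ j * (i : ℕ) := ⟨_, rfl⟩
    obtain ⟨u1, hu1⟩ : ∃ u1 : ℝ, u1 = a + δ j * ((i : ℕ) + 1) := ⟨_, rfl⟩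
    have hFi : q (Function.update y j u0) =
        q y + A * (-(t * δ j)) + (1/2) * H j j * (t * δ j)^2 := by
      rw [q_update_eq f0 g H hH x0 q hq y j]
      have hc : u0 - y j = -(t * δ j) := by
        rw [hu0, htd, hs]; ring
      rw [hc, hA]; try ring
    have hFi1 : q (Function.update y j u1) =
        q y + A * ((1 - t) * δ j) + (1/2) * H j j * ((1 - t) * δ j)^2 := by
      rw [q_update_eq f0 g H hH x0 q hq y j]
      have hc : u1 - y j = (1 - t) * δ j := by
        have h7 : (1 - t) * δ j = δ j - (s - δ j * i) := by rw [← htd]; ring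
        rw [hu1, h7, hs]; ring
      rw [hc, hA]; try ring
    have hbound : (1/2) * H j j * (t * (1 - t) * δ j ^ 2) ≤ (1/8) * lam * δ j ^ 2 := by
      rcases le_or_gt (H j j) 0 with hneg | hpos
      · have h1 : 0 ≤ t * (1 - t) * δ j ^ 2 :=
          mul_nonneg (mul_nonneg ht0 (by linarith)) (sq_nonneg _)
        have h2 : (1:ℝ)/2 * H j j * (t * (1 - t) * δ j ^ 2) ≤ 0 :=
          mul_nonpos_of_nonpos_of_nonneg (by linarith) h1
        have h3 : 0 ≤ (1:ℝ)/8 * lam * δ j ^ 2 := by positivity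
        linarith
      · have h4 : t * (1 - t) ≤ 1/4 := by nlinarith [sq_nonneg (2*t - 1)]
        have h5 : H j j * (t * (1 - t)) ≤ lam * (1/4) :=
          mul_le_mul hHjj h4 (mul_nonneg ht0 (by linarith)) hlam0
        have h6 := mul_le_mul_of_nonneg_right h5 (sq_nonneg (δ j))
        linarith [h6]
    have hcomb : (1 - t) * q (Function.update y j u0) + t * q (Function.update y j u1)
        = q y + (1/2) * H j j * (t * (1 - t) * δ j ^ 2) := by
      rw [hFi, hFi1]; ring
    rcases le_total (q (Function.update y j u0)) (q (Function.update y j u1)) with hle | hle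
    · refine ⟨⟨i, by omega⟩, ?_, ?_⟩
      · exact hfeas i (by omega)
      · rw [show ((⟨i, by omega⟩ : Fin (N+1)) : ℕ) = i from rfl, ← hu0]
        have h8 := mul_le_mul_of_nonneg_left hle ht0
        linarith [hcomb, hbound, h8]
    · refine ⟨⟨i + 1, by omega⟩, ?_, ?_⟩
      · exact hfeas (i+1) hiN
      · rw [show ((⟨i + 1, by omega⟩ : Fin (N+1)) : ℕ) = i + 1 from rfl]
        have hcast : ((i + 1 : ℕ) : ℝ) = (i : ℝ) + 1 := by push_cast; ring
        rw [hcast, ← hu1]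
        have h1t : (0:ℝ) ≤ 1 - t := by linarith
        have h8 := mul_le_mul_of_nonneg_left hle h1t
        linarith [hcomb, hbound, h8]

set_option maxHeartbeats 1000000 in
lemma grid_exists {K : ℕ} (f0 : ℝ) (g : Fin K → ℝ) (H : Matrix (Fin K) (Fin K) ℝ)
    (hH : H.IsHermitian) (x0 r : Fin K → ℝ) (hr : ∀ k, 0 ≤ r k) (N : ℕ) (hN : 0 < N)
    (δ : Fin K → ℝ) (hδ : δ = fun k => 2 * r k / N)
    (q : (Fin K → ℝ) → ℝ)
    (hq : q = fun x => f0 + g ⬝ᵥ (x - x0) + (1 / 2) * ((x - x0) ⬝ᵥ H *ᵥ (x - x0)))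
    (lam : ℝ) (hlam : lam = max (⨆ k, hH.eigenvalues k) 0)
    (S : Finset (Fin K)) :
    ∀ y : Fin K → ℝ, (∀ k, |y k - x0 k| ≤ r k) →
    ∃ n : Fin K → Fin (N + 1),
      (∀ k, |(if k ∈ S then x0 k - r k + δ k * ((n k : ℕ) : ℝ) else y k) - x0 k| ≤ r k) ∧
      q (fun k => if k ∈ S then x0 k - r k + δ k * ((n k : ℕ) : ℝ) else y k) ≤
        q y + (1 / 8) * lam * ∑ k ∈ S, δ k ^ 2 := by
  induction S using Finset.induction_on with
  | empty =>
    intro y hy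
    refine ⟨fun _ => ⟨0, by omega⟩, ?_, ?_⟩
    · simpa using hy
    · simp
  | @insert j S hj ih =>
    intro y hy
    obtain ⟨n, hfeas, hle⟩ := ih y hy
    set pt : Fin K → ℝ := fun k => if k ∈ S then x0 k - r k + δ k * ((n k : ℕ) : ℝ) else y k
      with hpt
    obtain ⟨m, hmfeas, hmle⟩ := step_exists f0 g H hH x0 r hr N hN δ hδ q hq lam hlam
      pt hfeas j
    refine ⟨Function.update n j m, ?_, ?_⟩
    · intro k
      by_cases hk : k = j
      · subst hk
        simpa [Finset.mem_insert, Function.update_self] using hmfeas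
      · have : (if k ∈ insert j S then x0 k - r k + δ k * ((Function.update n j m k : ℕ) : ℝ)
            else y k) = pt k := by
          simp [Finset.mem_insert, hk, Function.update_of_ne hk, hpt]
        rw [this]
        exact hfeas k
    · have hpteq : (fun k => if k ∈ insert j S then
          x0 k - r k + δ k * ((Function.update n j m k : ℕ) : ℝ) else y k)
          = Function.update pt j (x0 j - r j + δ j * (m : ℕ)) := by
        funext k
        by_cases hk : k = j
        · subst hk
          simp [Function.update_self]
        · simp [Finset.mem_insert, hk, Function.update_of_ne hk, hpt]
      rw [hpteq, Finset.sum_insert hj]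
      calc q (Function.update pt j (x0 j - r j + δ j * (m : ℕ)))
          ≤ q pt + (1 / 8) * lam * δ j ^ 2 := hmle
        _ ≤ q y + (1 / 8) * lam * ∑ k ∈ S, δ k ^ 2 + (1 / 8) * lam * δ j ^ 2 := by linarith
        _ = q y + (1 / 8) * lam * (δ j ^ 2 + ∑ k ∈ S, δ k ^ 2) := by ring


/-- Discretisation-error bound: the minimum of the quadratic model `q` over the
hyper-rectangular trust region is at least the minimum of `q` over the grid of
spacing `δ = 2r/N` minus `(1/8) λ δᵀδ`, where `λ = max(λ_max(H₀), 0)`. -/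
theorem discretisation_error_bound {K : ℕ} (f0 : ℝ) (g : Fin K → ℝ)
    (H : Matrix (Fin K) (Fin K) ℝ) (hH : H.IsHermitian)
    (x0 r : Fin K → ℝ) (hr : ∀ k, 0 ≤ r k) (N : ℕ) (hN : 0 < N)
    (δ : Fin K → ℝ) (hδ : δ = fun k => 2 * r k / N)
    (q : (Fin K → ℝ) → ℝ)
    (hq : q = fun x => f0 + g ⬝ᵥ (x - x0) + (1 / 2) * ((x - x0) ⬝ᵥ H *ᵥ (x - x0)))
    (lam : ℝ) (hlam : lam = max (⨆ k, hH.eigenvalues k) 0)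
    (x : Fin K → ℝ) (hx : ∀ k, |x k - x0 k| ≤ r k) :
    (⨅ n : Fin K → Fin (N + 1), q fun k => x0 k - r k + δ k * (n k : ℕ)) -
      (1 / 8) * lam * (∑ k, δ k ^ 2) ≤ q x := by
  obtain ⟨n, -, hle⟩ := grid_exists f0 g H hH x0 r hr N hN δ hδ q hq lam hlam
    Finset.univ x hx
  have hpt : (fun k => if k ∈ Finset.univ then x0 k - r k + δ k * ((n k : ℕ) : ℝ) else x k)
      = fun k => x0 k - r k + δ k * ((n k : ℕ) : ℝ) := by
    funext k; simp
  rw [hpt] at hle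
  have hinf : (⨅ n' : Fin K → Fin (N + 1), q fun k => x0 k - r k + δ k * ((n' k : ℕ) : ℝ))
      ≤ q fun k => x0 k - r k + δ k * ((n k : ℕ) : ℝ) :=
    ciInf_le (Set.Finite.bddBelow (Set.finite_range _)) n
  have hsum : ∑ k ∈ Finset.univ, δ k ^ 2 = ∑ k, δ k ^ 2 := rfl
  linarith [hle, hinf]
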